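/- arXiv:1603.04629 — 2 statements merged into one kernel-verified Lean document; each statement's English description precedes it below -/
import Mathlib

section
/- Let r ≥ 1 and let A be a 2r × r complex matrix with det A_Λ ≠ 0. Then the map φ : ℂ^r → ℂ^{2r} defined by φ(z)_i = exp((Az)_i) is a topological embedding, and its image is a closed subset of the subspace {w ∈ ℂ^{2r} : w_i ≠ 0 for all i} (with the topology induced from ℂ^{2r}). -/
open Matrix Complex Topology

/-- For a `2r × r` complex matrix `A = (aᵢʲ)`, `ALambda A` is the `2r × 2r` real matrix
whose `(i, 2j)` entry (0-indexed; `(i, 2j-1)` in 1-indexed notation) is `Re aᵢʲ` and whose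
`(i, 2j+1)` entry is `-Im aᵢʲ`. -/
noncomputable def ALambda {r : ℕ} (A : Matrix (Fin (2 * r)) (Fin r) ℂ) :
    Matrix (Fin (2 * r)) (Fin (2 * r)) ℝ := fun i k =>
  if k.val % 2 = 0 then (A i ⟨k.val / 2, by have := k.isLt; omega⟩).re
  else -(A i ⟨k.val / 2, by have := k.isLt; omega⟩).im

/-- interleaving equiv -/
def interE (r : ℕ) : Fin r × Fin 2 ≃ Fin (2 * r) where
  toFun x := ⟨2 * x.1.val + x.2.val, by have := x.1.isLt; have := x.2.isLt; omega⟩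
  invFun k := (⟨k.val / 2, by have := k.isLt; omega⟩, ⟨k.val % 2, by omega⟩)
  left_inv := by rintro ⟨⟨j, hj⟩, ⟨b, hb⟩⟩; ext <;> simp <;> omega
  right_inv := by rintro ⟨k, hk⟩; ext; simp; omega

noncomputable def fmap (r : ℕ) (z : Fin r → ℂ) : Fin (2 * r) → ℝ := fun k =>
  if k.val % 2 = 0 then (z ⟨k.val / 2, by have := k.isLt; omega⟩).re
  else (z ⟨k.val / 2, by have := k.isLt; omega⟩).im

noncomputable def gmap (r : ℕ) (c : Fin (2 * r) → ℝ) : Fin r → ℂ := fun j =>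
  (c ⟨2 * j.val, by have := j.isLt; omega⟩ : ℝ) +
    (c ⟨2 * j.val + 1, by have := j.isLt; omega⟩ : ℝ) * Complex.I

lemma key (r : ℕ) (A : Matrix (Fin (2 * r)) (Fin r) ℂ) (z : Fin r → ℂ) :
    (ALambda A).mulVec (fmap r z) = fun i => (A.mulVec z i).re := by
  funext i
  simp only [Matrix.mulVec, dotProduct, Complex.re_sum]
  rw [← Fintype.sum_equiv (interE r) _ (fun k => ALambda A i k * fmap r z k) (fun _ => rfl)]
  rw [Fintype.sum_prod_type]
  refine Finset.sum_congr rfl fun j _ => ?_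
  rw [Fin.sum_univ_two]
  simp only [interE, Equiv.coe_fn_mk, ALambda, fmap, Complex.mul_re]
  have h0 : (2 * j.val + 0) % 2 = 0 := by omega
  have h1 : ¬ (2 * j.val + 1) % 2 = 0 := by omega
  have d0 : (2 * j.val + 0) / 2 = j.val := by omega
  have d1 : (2 * j.val + 1) / 2 = j.val := by omega
  simp only [Fin.val_zero, Fin.val_one, if_pos h0, if_neg h1, d0, d1, Fin.eta]
  ring

lemma gf (r : ℕ) (z : Fin r → ℂ) : gmap r (fmap r z) = z := by
  funext j
  have h0 : (2 * j.val) % 2 = 0 := by omega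
  have h1 : ¬ (2 * j.val + 1) % 2 = 0 := by omega
  have d0 : (2 * j.val) / 2 = j.val := by omega
  have d1 : (2 * j.val + 1) / 2 = j.val := by omega
  simp only [gmap, fmap, if_pos h0, if_neg h1, d0, d1, Fin.eta]
  exact Complex.re_add_im (z j)

noncomputable def psi (r : ℕ) (A : Matrix (Fin (2 * r)) (Fin r) ℂ)
    (w : Fin (2 * r) → ℂ) : Fin r → ℂ :=
  gmap r ((ALambda A)⁻¹.mulVec (fun i => Real.log ‖w i‖))

lemma psi_phi (r : ℕ) (A : Matrix (Fin (2 * r)) (Fin r) ℂ)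
    (hdet : (ALambda A).det ≠ 0) (z : Fin r → ℂ) :
    psi r A (fun i => Complex.exp (A.mulVec z i)) = z := by
  unfold psi
  have h1 : (fun i => Real.log ‖Complex.exp (A.mulVec z i)‖)
      = (ALambda A).mulVec (fmap r z) := by
    rw [key]
    funext i
    rw [Complex.norm_exp, Real.log_exp]
  rw [h1, Matrix.mulVec_mulVec, Matrix.nonsing_inv_mul _ (isUnit_iff_ne_zero.mpr hdet),
    Matrix.one_mulVec, gf]

lemma cont_phi (r : ℕ) (A : Matrix (Fin (2 * r)) (Fin r) ℂ) :
    Continuous (fun (z : Fin r → ℂ) (i : Fin (2 * r)) => Complex.exp (A.mulVec z i)) := by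
  refine continuous_pi fun i => Complex.continuous_exp.comp ?_
  simp only [Matrix.mulVec, dotProduct]
  exact continuous_finset_sum _ fun j _ => continuous_const.mul (continuous_apply j)

lemma cont_psi (r : ℕ) (A : Matrix (Fin (2 * r)) (Fin r) ℂ) :
    Continuous (fun (w : {w : Fin (2 * r) → ℂ // ∀ i, w i ≠ 0}) => psi r A w.1) := by
  have hlog : Continuous (fun (w : {w : Fin (2 * r) → ℂ // ∀ i, w i ≠ 0})
      (i : Fin (2 * r)) => Real.log ‖w.1 i‖) := by
    refine continuous_pi fun i => ?_
    rw [continuous_iff_continuousAt]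
    intro w
    exact (Real.continuousAt_log (by simp [w.2 i])).comp
      ((continuous_norm.comp
        ((continuous_apply i).comp continuous_subtype_val)).continuousAt)
  have hmul : Continuous (fun (c : Fin (2 * r) → ℝ) => (ALambda A)⁻¹.mulVec c) := by
    refine continuous_pi fun i => ?_
    simp only [Matrix.mulVec, dotProduct]
    exact continuous_finset_sum _ fun j _ => continuous_const.mul (continuous_apply j)
  have hg : Continuous (gmap r) := by
    refine continuous_pi fun j => ?_
    exact (Complex.continuous_ofReal.comp (continuous_apply _)).add
      ((Complex.continuous_ofReal.comp (continuous_apply _)).mul continuous_const)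
  exact hg.comp (hmul.comp hlog)

theorem stmt4 (r : ℕ) (hr : 1 ≤ r) (A : Matrix (Fin (2 * r)) (Fin r) ℂ)
    (hdet : (ALambda A).det ≠ 0) :
    IsEmbedding (fun (z : Fin r → ℂ) (i : Fin (2 * r)) => Complex.exp (A.mulVec z i)) ∧
    IsClosed {w : {w : Fin (2 * r) → ℂ // ∀ i, w i ≠ 0} |
      (w : Fin (2 * r) → ℂ) ∈
        Set.range (fun (z : Fin r → ℂ) (i : Fin (2 * r)) => Complex.exp (A.mulVec z i))} := by
  set Phi := fun (z : Fin r → ℂ) (i : Fin (2 * r)) => Complex.exp (A.mulVec z i) with hPhi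
  set Phi' : (Fin r → ℂ) → {w : Fin (2 * r) → ℂ // ∀ i, w i ≠ 0} :=
    fun z => ⟨Phi z, fun i => Complex.exp_ne_zero _⟩ with hPhi'
  set Psi : {w : Fin (2 * r) → ℂ // ∀ i, w i ≠ 0} → (Fin r → ℂ) :=
    fun w => psi r A w.1 with hPsi
  have hLI : Function.LeftInverse Psi Phi' := fun z => psi_phi r A hdet z
  have hcPhi : Continuous Phi := cont_phi r A
  have hcPhi' : Continuous Phi' := hcPhi.subtype_mk _
  have hcPsi : Continuous Psi := cont_psi r A
  have hembPhi' : IsEmbedding Phi' := hLI.isEmbedding hcPsi hcPhi'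
  constructor
  · have : Phi = Subtype.val ∘ Phi' := rfl
    rw [this]
    exact IsEmbedding.subtypeVal.comp hembPhi'
  · have hset : {w : {w : Fin (2 * r) → ℂ // ∀ i, w i ≠ 0} |
        (w : Fin (2 * r) → ℂ) ∈ Set.range Phi}
        = {w | Phi (Psi w) = (w : Fin (2 * r) → ℂ)} := by
      ext w
      constructor
      · rintro ⟨z, hz⟩
        have : Psi w = z := by
          have : w = Phi' z := Subtype.ext hz.symm
          rw [this]; exact hLI z
        simp only [Set.mem_setOf_eq, this, hz]
      · intro h
        exact ⟨Psi w, h⟩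
    rw [hset]
    exact isClosed_eq (hcPhi.comp hcPsi) continuous_subtype_val
end

section
/- Let r ≥ 1 and let A be a 2r × r complex matrix with det A_Λ ≠ 0. Then for every w ∈ ℂ^{2r} with w_i ≠ 0 for all i, there exist a unique z ∈ ℂ^r and a unique u ∈ ℂ^{2r} with |u_i| = 1 for all i, such that w_i = exp((Az)_i) · u_i for all i = 1,…,2r. (This expresses the Cartan subgroup (ℂ^×)^{2r} as the product exp(𝔞) · (S^1)^{2r} with exp(𝔞) ∩ (S^1)^{2r} = {1}, which is the abelian case of the decomposition K_ℂ = K·L with K ∩ L = 1 of Proposition 2.1.) -/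
open Matrix Complex

/-- The identification `ℂ^r ≅ ℝ^{2r}`. -/
def realify {r : ℕ} (z : Fin r → ℂ) : Fin (2 * r) → ℝ := fun k =>
  if k.val % 2 = 0 then (z ⟨k.val / 2, by have := k.isLt; omega⟩).re
  else (z ⟨k.val / 2, by have := k.isLt; omega⟩).im

/-- Pairing equivalence `Fin r × Fin 2 ≃ Fin (2 * r)`. -/
def pairEquiv (r : ℕ) : Fin r × Fin 2 ≃ Fin (2 * r) where
  toFun p := ⟨2 * p.1.val + p.2.val, by have := p.1.isLt; have := p.2.isLt; omega⟩
  invFun k := (⟨k.val / 2, by have := k.isLt; omega⟩, ⟨k.val % 2, by omega⟩)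
  left_inv p := by
    have h1 := p.1.isLt; have h2 := p.2.isLt
    ext <;> simp <;> omega
  right_inv k := by
    have := k.isLt
    ext; simp; omega

lemma realify_injective {r : ℕ} : Function.Injective (realify (r := r)) := by
  intro z z' h
  funext j
  have h1 := congrFun h ⟨2 * j.val, by have := j.isLt; omega⟩
  have h2 := congrFun h ⟨2 * j.val + 1, by have := j.isLt; omega⟩
  simp only [realify] at h1 h2
  simp only [if_pos (by omega : 2 * j.val % 2 = 0)] at h1
  simp only [if_neg (by omega : ¬ (2 * j.val + 1) % 2 = 0)] at h2
  have e1 : 2 * j.val / 2 = j.val := by omega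
  have e2 : (2 * j.val + 1) / 2 = j.val := by omega
  simp only [e1, e2] at h1 h2
  apply Complex.ext
  · simpa using h1
  · simpa using h2

lemma realify_surjective {r : ℕ} : Function.Surjective (realify (r := r)) := by
  intro x
  refine ⟨fun j => ⟨x ⟨2 * j.val, by have := j.isLt; omega⟩,
    x ⟨2 * j.val + 1, by have := j.isLt; omega⟩⟩, ?_⟩
  funext k
  have hk := k.isLt
  simp only [realify]
  by_cases h : k.val % 2 = 0
  · rw [if_pos h]
    congr 1
    exact Fin.ext (by simp; omega)
  · rw [if_neg h]
    congr 1
    exact Fin.ext (by simp; omega)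

lemma key_re {r : ℕ} (A : Matrix (Fin (2 * r)) (Fin r) ℂ) (z : Fin r → ℂ)
    (i : Fin (2 * r)) :
    ((A.mulVec z) i).re = (ALambda A).mulVec (realify z) i := by
  simp only [Matrix.mulVec, dotProduct]
  rw [Complex.re_sum]
  rw [← Equiv.sum_comp (pairEquiv r) (fun k => ALambda A i k * realify z k)]
  rw [Fintype.sum_prod_type]
  apply Finset.sum_congr rfl
  intro j _
  rw [Fin.sum_univ_two]
  have hj := j.isLt
  have e0 : ((pairEquiv r) (j, 0)).val = 2 * j.val := by simp [pairEquiv]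
  have e1 : ((pairEquiv r) (j, 1)).val = 2 * j.val + 1 := by simp [pairEquiv]
  simp only [ALambda, realify, e0, e1]
  rw [if_pos (by omega), if_pos (by omega), if_neg (by omega), if_neg (by omega)]
  have d0 : 2 * j.val / 2 = j.val := by omega
  have d1 : (2 * j.val + 1) / 2 = j.val := by omega
  simp only [d0, d1, Complex.mul_re]
  have : (⟨j.val, hj⟩ : Fin r) = j := rfl
  rw [this]
  ring

theorem stmt5 (r : ℕ) (hr : 1 ≤ r) (A : Matrix (Fin (2 * r)) (Fin r) ℂ)
    (hdet : (ALambda A).det ≠ 0) :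
    ∀ w : Fin (2 * r) → ℂ, (∀ i, w i ≠ 0) →
      ∃! p : (Fin r → ℂ) × (Fin (2 * r) → ℂ),
        (∀ i, ‖p.2 i‖ = 1) ∧
        ∀ i, w i = Complex.exp (A.mulVec p.1 i) * p.2 i := by
  intro w hw
  have hinj : Function.Injective (ALambda A).mulVec := by
    intro a b hab
    have := congrArg (fun v => (ALambda A)⁻¹.mulVec v) hab
    simpa [Matrix.mulVec_mulVec, Matrix.nonsing_inv_mul _ (isUnit_iff_ne_zero.mpr hdet), Matrix.one_mulVec] using this
  set c : Fin (2 * r) → ℝ := fun i => Real.log (‖w i‖) with hc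
  have hx : (ALambda A).mulVec ((ALambda A)⁻¹.mulVec c) = c := by
    rw [Matrix.mulVec_mulVec, Matrix.mul_nonsing_inv _ (isUnit_iff_ne_zero.mpr hdet), Matrix.one_mulVec]
  obtain ⟨z, hz⟩ := realify_surjective ((ALambda A)⁻¹.mulVec c)
  have hre : ∀ i, (A.mulVec z i).re = Real.log (‖w i‖) := by
    intro i
    rw [key_re, hz, hx]
  set u : Fin (2 * r) → ℂ := fun i => w i / Complex.exp (A.mulVec z i) with hu
  have habs : ∀ i, ‖u i‖ = 1 := by
    intro i
    rw [hu]
    simp only [norm_div, Complex.norm_exp, hre i]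
    rw [Real.exp_log (norm_pos_iff.mpr (hw i))]
    exact div_self (ne_of_gt (norm_pos_iff.mpr (hw i)))
  refine ⟨(z, u), ⟨habs, fun i => ?_⟩, ?_⟩
  · simp only [hu]
    rw [mul_div_assoc', mul_div_cancel_left₀ _ (Complex.exp_ne_zero _)]
  · rintro ⟨z', u'⟩ ⟨h1, h2⟩
    have hre' : ∀ i, (A.mulVec z' i).re = Real.log (‖w i‖) := by
      intro i
      have := congrArg norm (h2 i)
      rw [norm_mul, Complex.norm_exp, h1 i, mul_one] at this
      rw [this, Real.log_exp]
    have hzz : z' = z := by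
      apply realify_injective
      apply hinj
      funext i
      rw [← key_re, ← key_re, hre, hre']
    have huu : u' = u := by
      funext i
      have h := h2 i
      rw [hzz] at h
      show u' i = w i / Complex.exp (A.mulVec z i)
      rw [h]
      exact (mul_div_cancel_left₀ _ (Complex.exp_ne_zero _)).symm
    simp [hzz, huu]
end
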